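/- In the Reverse Firework process on ℕ, if ∏_{k≥0} α_k = 0 then the rumor survives almost surely: P(N = ∞) = 1, where N is the final number of spreaders. -/

import Mathlib

open MeasureTheory ProbabilityTheory Filter Finset
open scoped ENNReal

/-- in the Reverse Firework process, if `∏_{k≥0} α_k = 0`
then the rumor survives almost surely: `P(N = ∞) = 1`. -/
theorem rumor_stmt_10 {Ω : Type*} [MeasurableSpace Ω] (P : Measure Ω) [IsProbabilityMeasure P]
    (R : ℕ → Ω → ℕ) (hmeas : ∀ i, Measurable (R i))
    (hindep : iIndepFun R P)
    (hident : ∀ i, Measure.map (R i) P = Measure.map (R 0) P)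
    (α : ℕ → ℝ≥0∞) (hα : ∀ k, P {ω | R 0 ω ≤ k} = α k)
    (hle1 : ∀ k, α k ≤ 1) (hα0 : 0 < α 0 ∧ α 0 < 1)
    (hprod0 : Tendsto (fun n => ∏ i ∈ Finset.range n, α i) atTop (nhds 0))
    (ζ : ℕ → Ω → Bool)
    (hζ0 : ∀ ω, ζ 0 ω = true)
    (hζ : ∀ n : ℕ, 0 < n → ∀ ω,
      (ζ n ω = true ↔ ∃ m < n, ζ m ω = true ∧ n - m ≤ R n ω)) :
    P {ω | {n : ℕ | ζ n ω = true}.Infinite} = 1 := by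
  -- identical distribution: P {R i ≤ k} = α k
  have hαi : ∀ i k, P {ω | R i ω ≤ k} = α k := by
    intro i k
    have h1 : P {ω | R i ω ≤ k} = (Measure.map (R i) P) {x | x ≤ k} := by
      rw [Measure.map_apply (hmeas i) (by trivial : MeasurableSet {x : ℕ | x ≤ k})]
      rfl
    rw [h1, hident i, Measure.map_apply (hmeas 0) (by trivial), ← hα k]
    rfl
  -- the bad events
  set A : ℕ → Set Ω := fun M => ⋂ k, {ω | R (M + k + 1) ω ≤ k} with hA
  have hAmeas : ∀ M, MeasurableSet (A M) := fun M =>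
    MeasurableSet.iInter fun k =>
      hmeas (M + k + 1) (show MeasurableSet {x : ℕ | x ≤ k} by trivial)
  have hA0 : ∀ M, P (A M) = 0 := by
    intro M
    have hbound : ∀ K : ℕ, P (A M) ≤ ∏ i ∈ Finset.range K, α i := by
      intro K
      have hsub : A M ⊆ ⋂ k ∈ Finset.range K, {ω | R (M + k + 1) ω ≤ k} := by
        intro ω hω
        simp only [Set.mem_iInter]
        intro k _
        exact Set.mem_iInter.mp hω k
      -- use independence over the image finset
      set s : Finset ℕ := (Finset.range K).image (fun k => M + k + 1) with hs
      have hinj : Set.InjOn (fun k => M + k + 1) (Finset.range K) := by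
        intro a _ b _ h
        have h' : M + a + 1 = M + b + 1 := h
        omega
      set sets : ℕ → Set ℕ := fun i => {x | M + x + 1 ≤ i} with hsets
      have key := hindep.measure_inter_preimage_eq_mul s (sets := sets)
        (fun i _ => by trivial)
      have himg : (⋂ i ∈ s, R i ⁻¹' sets i)
          = ⋂ k ∈ Finset.range K, {ω | R (M + k + 1) ω ≤ k} := by
        rw [hs]
        ext ω
        simp only [Set.mem_iInter, Finset.mem_image, Finset.mem_range]
        constructor
        · intro h k hk
          have := h (M + k + 1) ⟨k, hk, rfl⟩
          simp only [hsets, Set.mem_preimage, Set.mem_setOf_eq] at this ⊢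
          omega
        · rintro h i ⟨k, hk, rfl⟩
          have := h k hk
          simp only [hsets, Set.mem_preimage, Set.mem_setOf_eq] at this ⊢
          omega
      have hprod : ∏ i ∈ s, P (R i ⁻¹' sets i) = ∏ k ∈ Finset.range K, α k := by
        rw [hs, Finset.prod_image (fun a ha b hb h => hinj (by simpa using ha) (by simpa using hb) h)]
        refine Finset.prod_congr rfl fun k _ => ?_
        have : R (M + k + 1) ⁻¹' sets (M + k + 1) = {ω | R (M + k + 1) ω ≤ k} := by
          ext ω
          simp only [hsets, Set.mem_preimage, Set.mem_setOf_eq]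
          omega
        rw [this, hαi]
      calc P (A M) ≤ P (⋂ k ∈ Finset.range K, {ω | R (M + k + 1) ω ≤ k}) :=
            measure_mono hsub
        _ = ∏ k ∈ Finset.range K, α k := by rw [← himg, key, hprod]
    have : P (A M) ≤ 0 := ge_of_tendsto' hprod0 hbound
    exact le_antisymm this zero_le
  -- finiteness implies membership in some A M
  have hsub : {ω | {n : ℕ | ζ n ω = true}.Finite} ⊆ ⋃ M, A M := by
    intro ω hfin
    have h0 : (0 : ℕ) ∈ hfin.toFinset := by
      simp [Set.Finite.mem_toFinset, hζ0 ω]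
    set M := hfin.toFinset.max' ⟨0, h0⟩ with hM
    have hζM : ζ M ω = true := by
      have := hfin.toFinset.max'_mem ⟨0, h0⟩
      simpa [Set.Finite.mem_toFinset] using this
    have hmax : ∀ n, ζ n ω = true → n ≤ M := fun n hn =>
      hfin.toFinset.le_max' n (by simpa [Set.Finite.mem_toFinset] using hn)
    refine Set.mem_iUnion.mpr ⟨M, Set.mem_iInter.mpr fun k => ?_⟩
    -- site M + k + 1 is not informed
    have hfalse : ζ (M + k + 1) ω ≠ true := by
      intro h
      have := hmax _ h
      omega
    by_contra hR
    simp only [Set.mem_setOf_eq, not_le] at hR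
    exact hfalse ((hζ (M + k + 1) (by omega) ω).mpr
      ⟨M, by omega, hζM, by omega⟩)
  have hUnull : P (⋃ M, A M) = 0 :=
    le_antisymm (le_trans (measure_iUnion_le _) (by simp [hA0])) zero_le
  have hcomp : (⋃ M, A M)ᶜ ⊆ {ω | {n : ℕ | ζ n ω = true}.Infinite} := by
    intro ω hω
    by_contra h
    exact hω (hsub (Set.not_infinite.mp h))
  have h1 : (1 : ℝ≥0∞) ≤ P {ω | {n : ℕ | ζ n ω = true}.Infinite} := by
    calc (1 : ℝ≥0∞) = P ((⋃ M, A M)ᶜ) :=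
          ((prob_compl_eq_one_iff (MeasurableSet.iUnion hAmeas)).mpr hUnull).symm
      _ ≤ _ := measure_mono hcomp
  exact le_antisymm prob_le_one h1
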